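/- Let g, h : 2^E → ℝ≥0 be monotone and gross substitute with g(∅) = h(∅) = 0, and consider any double-greedy run for g and h. Then for every k ∈ {0, 1, …, n} and every S ⊆ E with |S| ≤ |H_k|, f(H_k) = h(H_k) + g(E \ H_k) ≥ h(S). -/

import Mathlib

namespace IncDec

open Finset

variable {α : Type*} [Fintype α] [DecidableEq α]

/-- Marginal gain `F(x | S) = F(S ∪ {x}) - F(S)`. -/
def marg (F : Finset α → ℝ) (x : α) (S : Finset α) : ℝ := F (insert x S) - F S

/-- Marginal gain of a set: `F(T | S) = F(T ∪ S) - F(S)`. -/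
def margSet (F : Finset α → ℝ) (T S : Finset α) : ℝ := F (T ∪ S) - F S

/-- Monotone set function. -/
def Mono (F : Finset α → ℝ) : Prop := ∀ ⦃S T : Finset α⦄, S ⊆ T → F S ≤ F T

/-- Nonnegative set function. -/
def Nonneg (F : Finset α → ℝ) : Prop := ∀ S : Finset α, 0 ≤ F S

/-- The combined objective `f(S) = h(S) + g(E \ S)`. -/
def fObj (g h : Finset α → ℝ) (S : Finset α) : ℝ := h S + g Sᶜ

/-- `F` has generic submodularity ratio at least `γ`. -/
def GenSubRatioGE (F : Finset α → ℝ) (γ : ℝ) : Prop :=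
  ∀ A B : Finset α, ∀ e : α, marg F e A ≥ γ * marg F e (A ∪ B)

/-- `F` has curvature at most `c`. -/
def CurvatureLE (F : Finset α → ℝ) (c : ℝ) : Prop :=
  ∀ A B : Finset α, ∀ e : α, e ∉ B → marg F e (A ∪ B) ≥ (1 - c) * marg F e A

/-- Submodular set function. -/
def Submodular (F : Finset α → ℝ) : Prop :=
  ∀ ⦃S T : Finset α⦄, S ⊆ T → ∀ e : α, e ∉ T → marg F e T ≤ marg F e S

/-- Modular set function. -/
def Modular (F : Finset α → ℝ) : Prop := ∀ S : Finset α, F S = ∑ e ∈ S, F {e}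

/-- Gross substitute set function. -/
def GrossSubstitute (F : Finset α → ℝ) : Prop :=
  Submodular F ∧
    ∀ A B : Finset α, Disjoint A B → 2 ≤ B.card → ∀ b ∈ B,
      ∃ b' ∈ B.erase b,
        marg F b A + margSet F (B.erase b) A ≤ marg F b' A + margSet F (B.erase b') A

/-- The set of ratios appearing in the definition of the curvature. -/
def curvRatioSet (F : Finset α → ℝ) : Set ℝ :=
  {r | ∃ A B : Finset α, ∃ e : α, e ∉ B ∧ 0 < marg F e A ∧ r = marg F e (A ∪ B) / marg F e A}

/-- `F` has curvature exactly `c` (with `min ∅ := 1`, i.e. `c = 0` if the ratio set is empty). -/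
def CurvatureEq (F : Finset α → ℝ) (c : ℝ) : Prop :=
  (¬ (curvRatioSet F).Nonempty ∧ c = 0) ∨ IsLeast (curvRatioSet F) (1 - c)

/-- The set of ratios appearing in the definition of the generic submodularity ratio. -/
def gsRatioSet (F : Finset α → ℝ) : Set ℝ :=
  {r | ∃ A B : Finset α, ∃ e : α, 0 < marg F e (A ∪ B) ∧ r = marg F e A / marg F e (A ∪ B)}

/-- `F` has generic submodularity ratio exactly `γ` (with `min ∅ := 1`). -/
def GenSubRatioEq (F : Finset α → ℝ) (γ : ℝ) : Prop :=
  (¬ (gsRatioSet F).Nonempty ∧ γ = 1) ∨ IsLeast (gsRatioSet F) γ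

/-- The singleton-based ratio set `{F(e | E \ {e}) / F({e}) : e ∈ E, F({e}) > 0}`. -/
def curvSingletonSet (F : Finset α → ℝ) : Set ℝ :=
  {r | ∃ e : α, 0 < F {e} ∧ r = marg F e ({e}ᶜ) / F {e}}

/-- A run of the double-greedy algorithm for `g` and `h`: distinct elements `elt 0, …,
`elt (n-1)` enumerating `E` (`elt i` is the element `e*_{i+1}` of the paper), together with the
sets `H i`, `G i` (for `0 ≤ i ≤ n`), each new element maximizing the larger marginal gain and
being added to the side realizing it. -/
structure DGRun (α : Type*) [Fintype α] [DecidableEq α] (g h : Finset α → ℝ) where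
  elt : ℕ → α
  H : ℕ → Finset α
  G : ℕ → Finset α
  H0 : H 0 = ∅
  G0 : G 0 = ∅
  mem : ∀ i < Fintype.card α, elt i ∉ H i ∪ G i
  distinct : ∀ i < Fintype.card α, ∀ j < Fintype.card α, elt i = elt j → i = j
  enum : ∀ x : α, ∃ i < Fintype.card α, elt i = x
  greedy : ∀ i < Fintype.card α, ∀ x : α, x ∉ H i ∪ G i →
      max (marg g x (G i)) (marg h x (H i)) ≤ max (marg g (elt i) (G i)) (marg h (elt i) (H i))
  step : ∀ i < Fintype.card α,
      (H (i + 1) = insert (elt i) (H i) ∧ G (i + 1) = G i ∧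
        marg g (elt i) (G i) ≤ marg h (elt i) (H i)) ∨
      (G (i + 1) = insert (elt i) (G i) ∧ H (i + 1) = H i ∧
        marg h (elt i) (H i) ≤ marg g (elt i) (G i))

/-- `phi R i` is the increment `φ_{i+1}` of the double-greedy run `R`. -/
def phi {g h : Finset α → ℝ} (R : DGRun α g h) (i : ℕ) : ℝ :=
  max (marg g (R.elt i) (R.G i)) (marg h (R.elt i) (R.H i))

lemma marg_nonneg {F : Finset α → ℝ} (hF : Mono F) (x : α) (S : Finset α) :
    0 ≤ marg F x S := sub_nonneg.2 (hF (subset_insert _ _))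

lemma phi_nonneg {g h : Finset α → ℝ} (hgm : Mono g) (hhm : Mono h) (R : DGRun α g h)
    (i : ℕ) : 0 ≤ phi R i :=
  le_trans (marg_nonneg hhm _ _) (le_max_right _ _)

lemma HG_disj {g h : Finset α → ℝ} (R : DGRun α g h) :
    ∀ i, i ≤ Fintype.card α → Disjoint (R.H i) (R.G i) := by
  intro i
  induction i with
  | zero => intro _; simp [R.H0, R.G0]
  | succ i ih =>
    intro hi
    have hin : i < Fintype.card α := hi
    have hd := ih hin.le
    have hm := R.mem i hin
    simp only [mem_union, not_or] at hm
    rcases R.step i hin with ⟨h1, h2, _⟩ | ⟨h1, h2, _⟩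
    · rw [h1, h2]; exact (disjoint_insert_left).2 ⟨hm.2, hd⟩
    · rw [h1, h2]; exact (disjoint_insert_right).2 ⟨hm.1, hd⟩

lemma sumphi {g h : Finset α → ℝ} (hge : g ∅ = 0) (hhe : h ∅ = 0) (R : DGRun α g h) :
    ∀ i, i ≤ Fintype.card α →
      h (R.H i) + g (R.G i) = ∑ j ∈ Finset.range i, phi R j := by
  intro i
  induction i with
  | zero => intro _; simp [R.H0, R.G0, hge, hhe]
  | succ i ih =>
    intro hi
    have hin : i < Fintype.card α := hi
    rw [Finset.sum_range_succ, ← ih hin.le]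
    rcases R.step i hin with ⟨h1, h2, hle⟩ | ⟨h1, h2, hle⟩
    · rw [h1, h2, phi, max_eq_right hle, marg]; ring
    · rw [h1, h2, phi, max_eq_left hle, marg]; ring

lemma key {g h : Finset α → ℝ} (hgm : Mono g) (hhm : Mono h)
    (hhs : GrossSubstitute h) (R : DGRun α g h) {k : ℕ} (hk : k ≤ Fintype.card α) :
    ∀ d i, i + d = k → ∀ S : Finset α, Disjoint S (R.G i) →
      (S \ R.H i).card + (R.H i).card ≤ (R.H k).card →
      h (S ∪ R.H i) ≤ h (R.H i) + ∑ j ∈ Finset.Ico i k, phi R j := by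
  intro d
  induction d with
  | zero =>
    intro i hik S hdisj hcard
    have hik0 : i = k := by omega
    subst hik0
    have h0 : (S \ R.H i).card = 0 := by omega
    have hsub : S ⊆ R.H i := by
      rw [← Finset.sdiff_eq_empty_iff_subset]
      exact card_eq_zero.1 h0
    rw [union_eq_right.2 hsub]
    simp
  | succ d ih =>
    intro i hik S hdisj hcard
    have hik' : i < k := by omega
    have hin : i < Fintype.card α := lt_of_lt_of_le hik' hk
    have hm := R.mem i hin
    simp only [mem_union, not_or] at hm
    obtain ⟨heH, heG⟩ := hm
    have hsum : ∑ j ∈ Finset.Ico i k, phi R j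
        = phi R i + ∑ j ∈ Finset.Ico (i+1) k, phi R j :=
      Finset.sum_eq_sum_Ico_succ_bot hik' _
    have hik1 : (i+1) + d = k := by omega
    have hgreedy : ∀ x ∈ S, x ∉ R.H i → marg h x (R.H i) ≤ phi R i := by
      intro x hxS hxH
      have hx : x ∉ R.H i ∪ R.G i := by
        simp only [mem_union, not_or]
        exact ⟨hxH, Finset.disjoint_left.1 hdisj hxS⟩
      exact le_trans (le_max_right _ _) (R.greedy i hin x hx)
    rcases R.step i hin with ⟨h1, h2, hle⟩ | ⟨h1, h2, hle⟩
    · -- H-step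
      have hphi : phi R i = marg h (R.elt i) (R.H i) := max_eq_right hle
      have hH1 : h (R.H (i+1)) = h (R.H i) + phi R i := by
        rw [h1, hphi, marg]; ring
      by_cases heS : R.elt i ∈ S
      · have hd1 : Disjoint S (R.G (i+1)) := by rw [h2]; exact hdisj
        have hmemd : R.elt i ∈ S \ R.H i := mem_sdiff.2 ⟨heS, heH⟩
        have hc1 : (S \ R.H (i+1)).card + (R.H (i+1)).card ≤ (R.H k).card := by
          rw [h1]
          have hset : S \ insert (R.elt i) (R.H i) = (S \ R.H i).erase (R.elt i) := by
            ext x; simp only [mem_sdiff, mem_insert, mem_erase, not_or]; tauto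
          rw [hset, card_erase_of_mem hmemd, card_insert_of_notMem heH]
          have h1' : 1 ≤ (S \ R.H i).card := card_pos.2 ⟨_, hmemd⟩
          omega
        have hIH := ih (i+1) hik1 S hd1 hc1
        have hu : S ∪ R.H (i+1) = S ∪ R.H i := by
          rw [h1, Finset.union_insert, Finset.insert_eq_self.2 (mem_union_left _ heS)]
        rw [hu, hH1] at hIH
        rw [hsum]; linarith
      · by_cases hSH : S \ R.H i = ∅
        · have hsub : S ⊆ R.H i := Finset.sdiff_eq_empty_iff_subset.1 hSH
          rw [union_eq_right.2 hsub]
          have hpos : 0 ≤ ∑ j ∈ Finset.Ico i k, phi R j :=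
            Finset.sum_nonneg fun j _ => phi_nonneg hgm hhm R j
          linarith
        · -- exchange via gross substitutes
          obtain ⟨hsubm, hex⟩ := hhs
          have heSd : R.elt i ∉ S \ R.H i := fun hx => heS (mem_sdiff.1 hx).1
          have hdd : Disjoint (R.H i) (S \ R.H i) := by
            rw [Finset.disjoint_right]; intro x hx; exact (mem_sdiff.1 hx).2
          have hdisjAB : Disjoint (R.H i) (insert (R.elt i) (S \ R.H i)) :=
            (disjoint_insert_right).2 ⟨heH, hdd⟩
          have hcardB : 2 ≤ (insert (R.elt i) (S \ R.H i)).card := by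
            rw [card_insert_of_notMem heSd]
            have : 0 < (S \ R.H i).card := card_pos.2 (nonempty_of_ne_empty hSH)
            omega
          obtain ⟨b', hb', hineq⟩ := hex (R.H i) _ hdisjAB hcardB (R.elt i)
            (mem_insert_self _ _)
          rw [Finset.erase_insert heSd] at hb' hineq
          have hb'S : b' ∈ S := (mem_sdiff.1 hb').1
          have hb'H : b' ∉ R.H i := (mem_sdiff.1 hb').2
          have hb'e : b' ≠ R.elt i := fun hx => heS (hx ▸ hb'S)
          have hmargb' : marg h b' (R.H i) ≤ marg h (R.elt i) (R.H i) :=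
            hphi ▸ hgreedy b' hb'S hb'H
          have hs1 : (S \ R.H i) ∪ R.H i = S ∪ R.H i := sdiff_union_self_eq_union
          -- the exchanged set
          have hset : (insert (R.elt i) (S \ R.H i)).erase b' ∪ R.H i
              = insert (R.elt i) (S.erase b') ∪ R.H (i+1) := by
            rw [h1]; ext x
            simp only [mem_union, mem_insert, mem_erase, mem_sdiff]
            have hne : x = R.elt i → x ≠ b' := fun hx hc => hb'e (by rw [← hc, hx])
            constructor
            · rintro (⟨hxb, hx | ⟨hx1, hx2⟩⟩ | hx)
              · exact Or.inl (Or.inl hx)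
              · exact Or.inl (Or.inr ⟨hxb, hx1⟩)
              · exact Or.inr (Or.inr hx)
            · rintro ((hx | ⟨hx1, hx2⟩) | hx | hx)
              · exact Or.inl ⟨hne hx, Or.inl hx⟩
              · by_cases hxH : x ∈ R.H i
                · exact Or.inr hxH
                · exact Or.inl ⟨hx1, Or.inr ⟨hx2, hxH⟩⟩
              · exact Or.inl ⟨hne hx, Or.inl hx⟩
              · exact Or.inr hx
          have hchain : h (S ∪ R.H i)
              ≤ h (insert (R.elt i) (S.erase b') ∪ R.H (i+1)) := by
            have := hineq
            simp only [marg, margSet] at this hmargb'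
            rw [hs1] at this
            rw [← hset]
            linarith
          have hd1 : Disjoint (insert (R.elt i) (S.erase b')) (R.G (i+1)) := by
            rw [h2, disjoint_insert_left]
            exact ⟨heG, Finset.disjoint_of_subset_left (erase_subset _ _) hdisj⟩
          have hc1 : ((insert (R.elt i) (S.erase b')) \ R.H (i+1)).card
              + (R.H (i+1)).card ≤ (R.H k).card := by
            rw [h1]
            have hset2 : (insert (R.elt i) (S.erase b')) \ insert (R.elt i) (R.H i)
                = (S \ R.H i).erase b' := by
              ext x
              simp only [mem_sdiff, mem_insert, mem_erase, not_or]
              constructor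
              · rintro ⟨hx | ⟨hx1, hx2⟩, hx3, hx4⟩ <;> tauto
              · rintro ⟨hx1, hx2, hx3⟩
                refine ⟨Or.inr ⟨hx1, hx2⟩, ?_, hx3⟩
                intro hxe; exact heS (hxe ▸ hx2)
            rw [hset2, card_erase_of_mem hb', card_insert_of_notMem heH]
            have h1' : 1 ≤ (S \ R.H i).card := card_pos.2 ⟨_, hb'⟩
            omega
          have hIH := ih (i+1) hik1 _ hd1 hc1
          rw [hH1] at hIH
          rw [hsum]; linarith
    · -- G-step
      have hphi : phi R i = marg g (R.elt i) (R.G i) := max_eq_left hle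
      by_cases heS : R.elt i ∈ S
      · -- remove elt i from S
        have hd1 : Disjoint (S.erase (R.elt i)) (R.G (i+1)) := by
          rw [h1, disjoint_insert_right]
          exact ⟨notMem_erase _ _,
            Finset.disjoint_of_subset_left (erase_subset _ _) hdisj⟩
        have hmemd : R.elt i ∈ S \ R.H i := mem_sdiff.2 ⟨heS, heH⟩
        have hc1 : ((S.erase (R.elt i)) \ R.H (i+1)).card + (R.H (i+1)).card
            ≤ (R.H k).card := by
          rw [h2]
          have hset : (S.erase (R.elt i)) \ R.H i = (S \ R.H i).erase (R.elt i) := by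
            ext x; simp only [mem_sdiff, mem_erase]; tauto
          rw [hset, card_erase_of_mem hmemd]
          have h1' : 1 ≤ (S \ R.H i).card := card_pos.2 ⟨_, hmemd⟩
          omega
        have hIH := ih (i+1) hik1 _ hd1 hc1
        rw [h2] at hIH
        have hnm : R.elt i ∉ S.erase (R.elt i) ∪ R.H i := by
          simp only [mem_union, not_or]
          exact ⟨notMem_erase _ _, heH⟩
        have hmsub : marg h (R.elt i) (S.erase (R.elt i) ∪ R.H i)
            ≤ marg h (R.elt i) (R.H i) :=
          hhs.1 subset_union_right _ hnm
        have hu : S ∪ R.H i = insert (R.elt i) (S.erase (R.elt i) ∪ R.H i) := by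
          ext x
          simp only [mem_union, mem_insert, mem_erase]
          constructor
          · rintro (hx | hx)
            · by_cases hxe : x = R.elt i <;> tauto
            · tauto
          · rintro (hx | ⟨hx1, hx2⟩ | hx) <;> simp_all
        have hexp : h (S ∪ R.H i) = h (S.erase (R.elt i) ∪ R.H i)
            + marg h (R.elt i) (S.erase (R.elt i) ∪ R.H i) := by
          rw [hu, marg]; ring
        have hple : marg h (R.elt i) (R.H i) ≤ phi R i := hphi ▸ hle
        rw [hsum]; linarith
      · have hd1 : Disjoint S (R.G (i+1)) := by
          rw [h1, disjoint_insert_right]; exact ⟨heS, hdisj⟩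
        have hc1 : (S \ R.H (i+1)).card + (R.H (i+1)).card ≤ (R.H k).card := by
          rw [h2]; exact hcard
        have hIH := ih (i+1) hik1 S hd1 hc1
        rw [h2] at hIH
        have hpos : 0 ≤ phi R i := phi_nonneg hgm hhm R i
        rw [hsum]; linarith

theorem stmt19 (g h : Finset α → ℝ)
    (hgm : Mono g) (hhm : Mono h) (hg0 : Nonneg g) (hh0 : Nonneg h)
    (hge : g ∅ = 0) (hhe : h ∅ = 0)
    (hgs : GrossSubstitute g) (hhs : GrossSubstitute h)
    (R : DGRun α g h) :
    ∀ k ≤ Fintype.card α, ∀ S : Finset α, S.card ≤ (R.H k).card →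
      fObj g h (R.H k) = h (R.H k) + g ((R.H k)ᶜ) ∧ fObj g h (R.H k) ≥ h S := by
  intro k hk S hS
  refine ⟨rfl, ?_⟩
  have hkey := key hgm hhm hhs R hk k 0 (by omega) S
    (by rw [R.G0]; exact disjoint_bot_right)
    (by rw [R.H0]; simpa using hS)
  rw [R.H0] at hkey
  simp only [Finset.union_empty, Finset.sdiff_empty, hhe] at hkey
  rw [← Finset.range_eq_Ico] at hkey
  have hsum := sumphi hge hhe R k hk
  have hdisj := HG_disj R k hk
  have hsub : R.G k ⊆ (R.H k)ᶜ := fun x hx =>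
    Finset.mem_compl.2 (Finset.disjoint_right.1 hdisj hx)
  have hg : g (R.G k) ≤ g ((R.H k)ᶜ) := hgm hsub
  show h S ≤ fObj g h (R.H k)
  unfold fObj
  linarith

end IncDec
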